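/- Let H, K be closed subspaces of L², let a₁, a₂ ∈ 𝒢L∞ with a₁K = H and a₂K = H, and let E = T_{ā₂}^{H,K} and F = T_{a₁}^{K,H} = M_{a₁}|_K. Then the following are equivalent: (i) E = F⁻¹; (ii) T_{ā₂ − a₁⁻¹}^{H,K} = 0; (iii) T_{ā₂⁻¹ − a₁}^{K,H} = 0; (iv) T_{1 − ā₂a₁}^K = 0; (v) T_{1 − ā₂⁻¹a₁⁻¹}^H = 0. (When these hold and φ = ā₂·ψ·a₁, the identity T_φ^K = E T_ψ^H F is a similarity between T_φ^K and T_ψ^H.) -/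

import Mathlib

open MeasureTheory

noncomputable section

/-! ## Setup: the circle, L², L∞, multiplication operators, Hardy space,
model spaces, and generalized Toeplitz operators -/

instance : Fact (0 < 2 * Real.pi) := ⟨by positivity⟩

/-- The normalized Lebesgue (Haar) measure `dθ/2π` on the circle. -/
abbrev μH : Measure (AddCircle (2 * Real.pi)) := AddCircle.haarAddCircle

/-- The Lebesgue space `L²` of the circle. -/
abbrev L2 : Type := Lp ℂ 2 μH

/-- The space `L∞` of essentially bounded functions on the circle. -/
abbrev Linf : Type := Lp ℂ ⊤ μH

/-- Pointwise (a.e.) multiplication on `L∞`. -/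
instance : Mul Linf :=
  ⟨fun f g => ((Lp.memLp g).smul (r := ⊤) (Lp.memLp f)).toLp (⇑f • ⇑g)⟩

/-- The constant function `1` as an element of `L∞`. -/
instance : One Linf := ⟨(memLp_const (1 : ℂ)).toLp (fun _ => (1 : ℂ))⟩

/-- Complex conjugation on `L∞`. -/
instance : Star Linf :=
  ⟨fun f => ((Complex.conjCLE.toContinuousLinearMap).comp_memLp' (Lp.memLp f)).toLp
    ((starRingEnd ℂ) ∘ ⇑f)⟩

/-- Multiplication of an `L²` function by an `L∞` function. -/
def mulFun (φ : Linf) (f : L2) : L2 :=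
  ((Lp.memLp f).smul (r := 2) (Lp.memLp φ)).toLp (⇑φ • ⇑f)

lemma mulFun_coe (φ : Linf) (f : L2) : mulFun φ f =ᵐ[μH] ⇑φ • ⇑f :=
  MemLp.coeFn_toLp _

lemma mulFun_norm_le (φ : Linf) (f : L2) : ‖mulFun φ f‖ ≤ ‖φ‖ * ‖f‖ := by
  rw [mulFun, Lp.norm_toLp, Lp.norm_def, Lp.norm_def, ← ENNReal.toReal_mul]
  refine ENNReal.toReal_mono ?_ ?_
  · exact ENNReal.mul_ne_top (Lp.eLpNorm_ne_top φ) (Lp.eLpNorm_ne_top f)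
  · exact eLpNorm_smul_le_eLpNorm_top_mul_eLpNorm 2 (Lp.aestronglyMeasurable f) ⇑φ

/-- The bounded multiplication operator `M_φ : L² → L²` for `φ ∈ L∞`. -/
def mulCLM (φ : Linf) : L2 →L[ℂ] L2 :=
  LinearMap.mkContinuous
    { toFun := mulFun φ
      map_add' := by
        intro f g
        apply Lp.ext
        filter_upwards [mulFun_coe φ (f + g), mulFun_coe φ f, mulFun_coe φ g,
          Lp.coeFn_add f g, Lp.coeFn_add (mulFun φ f) (mulFun φ g)] with x h1 h2 h3 h4 h5
        simp only [Pi.smul_apply', Pi.add_apply] at *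
        rw [h1, h5, h2, h3, h4]
        exact smul_add _ _ _
      map_smul' := by
        intro c f
        apply Lp.ext
        filter_upwards [mulFun_coe φ (c • f), mulFun_coe φ f,
          Lp.coeFn_smul c f, Lp.coeFn_smul c (mulFun φ f)] with x h1 h2 h3 h4
        simp only [Pi.smul_apply', Pi.smul_apply, RingHom.id_apply] at *
        rw [h1, h4, h2, h3]
        exact smul_comm _ _ _ }
    ‖φ‖ (mulFun_norm_le φ)

/-- The image `a·K = {a f : f ∈ K}` of a subspace `K ⊆ L²` under multiplication by `a ∈ L∞`. -/
def smulSub (a : Linf) (K : Submodule ℂ L2) : Submodule ℂ L2 :=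
  K.map (mulCLM a : L2 →ₗ[ℂ] L2)

/-- The Hardy space `H² = {f ∈ L² : f̂(n) = 0 for n < 0}`. -/
def Hardy : Submodule ℂ L2 where
  carrier := {f | ∀ n : ℤ, n < 0 → fourierBasis.repr f n = 0}
  add_mem' := by
    intro f g hf hg n hn
    rw [map_add, lp.coeFn_add, Pi.add_apply, hf n hn, hg n hn, add_zero]
  zero_mem' := by
    intro n hn
    rw [map_zero, lp.coeFn_zero]
    rfl
  smul_mem' := by
    intro c f hf n hn
    rw [_root_.map_smul, lp.coeFn_smul, Pi.smul_apply, hf n hn, smul_zero]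

lemma hardy_isClosed : IsClosed (Hardy : Set L2) := by
  have h : (Hardy : Set L2) =
      ⋂ n : {m : ℤ // m < 0}, {f : L2 | fourierBasis.repr f n.1 = 0} := by
    ext f
    constructor
    · intro hf
      exact Set.mem_iInter.2 fun n => hf n.1 n.2
    · intro hf n hn
      exact Set.mem_iInter.1 hf ⟨n, hn⟩
  rw [h]
  refine isClosed_iInter fun n => isClosed_eq ?_ continuous_const
  have : (fun f : L2 => fourierBasis.repr f n.1) =
      fun f : L2 => (innerSL ℂ (fourierBasis n.1)) f := by
    funext f
    exact fourierBasis.repr_apply_apply f n.1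
  rw [this]
  exact (innerSL ℂ (fourierBasis n.1)).continuous

instance : CompleteSpace Hardy := hardy_isClosed.completeSpace_coe

/-- The model space `K_θ = H² ⊖ θH² = H² ∩ (θH²)^⊥`. -/
def modelSpace (θ : Linf) : Submodule ℂ L2 :=
  Hardy ⊓ (smulSub θ Hardy)ᗮ

instance (θ : Linf) : CompleteSpace (modelSpace θ) := by
  refine IsClosed.completeSpace_coe (hs := ?_)
  have h : (modelSpace θ : Set L2) = (Hardy : Set L2) ∩ ((smulSub θ Hardy)ᗮ : Set L2) := rfl
  rw [h]
  exact hardy_isClosed.inter (smulSub θ Hardy).isClosed_orthogonal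

/-- The generalized Toeplitz operator `T_φ^{H₁,H₂} = P_{H₂} M_φ |_{H₁}`. -/
def genToeplitz (φ : Linf) (H₁ H₂ : Submodule ℂ L2) [CompleteSpace H₂] : H₁ →L[ℂ] H₂ :=
  H₂.orthogonalProjectionOnto.comp ((mulCLM φ).comp H₁.subtypeL)

/-- The orthogonal projection of `L²` onto `H`, viewed as an operator `L² → L²`. -/
def projL (H : Submodule ℂ L2) [CompleteSpace H] : L2 →L[ℂ] L2 :=
  H.subtypeL.comp H.orthogonalProjectionOnto

/-- `φ ∈ H∞`: all negative Fourier coefficients of `φ` vanish. -/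
def IsHardyInf (φ : Linf) : Prop := ∀ n : ℤ, n < 0 → fourierCoeff (⇑φ) n = 0

/-- `θ` is an inner function: `θ ∈ H∞` and `|θ| = 1` a.e. on the circle. -/
def IsInner (θ : Linf) : Prop :=
  IsHardyInf θ ∧ ∀ᵐ x ∂μH, ‖(θ : AddCircle (2 * Real.pi) → ℂ) x‖ = 1

/-- `a ∈ 𝒢H∞` with explicit inverse `b ∈ H∞`. -/
def GHinfPair (a b : Linf) : Prop := IsHardyInf a ∧ IsHardyInf b ∧ a * b = 1

/-- `a ∈ 𝒢H∞`: `a` is invertible in the algebra `H∞`. -/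
def IsGHinf (a : Linf) : Prop := ∃ b, GHinfPair a b

/-- `b ∈ 𝒢H̄∞`: `b` is the conjugate of an element of `𝒢H∞`. -/
def IsGHinfBar (b : Linf) : Prop := ∃ c, IsGHinf c ∧ b = star c

/-- `a ∈ 𝒢L∞` with explicit inverse `b`. -/
def GLinfPair (a b : Linf) : Prop := a * b = 1 ∧ b * a = 1

/-- `a ∈ 𝒢L∞`: `a` is invertible in the algebra `L∞`. -/
def IsGLinf (a : Linf) : Prop := ∃ b, GLinfPair a b

/-- The kernel of an operator between subspaces of `L²`, viewed as a subspace of `L²`. -/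
def subKer {K₁ K₂ : Submodule ℂ L2} (T : K₁ →L[ℂ] K₂) : Submodule ℂ L2 :=
  (LinearMap.ker (T : K₁ →ₗ[ℂ] K₂)).map K₁.subtype

/-- The range of an operator between subspaces of `L²`, viewed as a subspace of `L²`. -/
def subRan {K₁ K₂ : Submodule ℂ L2} (T : K₁ →L[ℂ] K₂) : Submodule ℂ L2 :=
  (LinearMap.range (T : K₁ →ₗ[ℂ] K₂)).map K₂.subtype

/-- The image of a subspace `S ⊆ K₁` under `T : K₁ → K₂`, viewed as a subspace of `L²`. -/
def opImage {K₁ K₂ : Submodule ℂ L2} (T : K₁ →L[ℂ] K₂) (S : Submodule ℂ K₁) :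
    Submodule ℂ L2 :=
  (S.map (T : K₁ →ₗ[ℂ] K₂)).map K₂.subtype

section Antilinear

variable {E : Type*} [NormedAddCommGroup E] [InnerProductSpace ℂ E]

/-- `C` is antilinear: `C(f + a g) = C f + ā C g`. -/
def IsAntilinearMap (C : E → E) : Prop :=
  ∀ (f g : E) (a : ℂ), C (f + a • g) = C f + (starRingEnd ℂ a) • C g

/-- `Cs` is the antilinear adjoint of `C`: `⟨C f, g⟩ = conj ⟨f, Cs g⟩`. -/
def IsAntilinearAdjointOf (C Cs : E → E) : Prop :=
  ∀ f g : E, (inner ℂ (C f) g : ℂ) = (starRingEnd ℂ) (inner ℂ f (Cs g) : ℂ)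

/-- `C` is an antilinear unitary: it is antilinear and its antilinear adjoint is its inverse. -/
def IsAntilinearUnitary (C : E → E) : Prop :=
  IsAntilinearMap C ∧ ∃ Cs : E → E, IsAntilinearAdjointOf C Cs ∧
    Function.LeftInverse Cs C ∧ Function.RightInverse Cs C

/-- `T` is complex selfadjoint with respect to `C` (with inverse `Cinv`): `C T C⁻¹ = T*`. -/
def IsComplexSelfadjointWith [CompleteSpace E] (T : E →L[ℂ] E) (C Cinv : E → E) : Prop :=
  ∀ f : E, C (T (Cinv f)) = ContinuousLinearMap.adjoint T f

end Antilinear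

section Helpers

open MeasureTheory Submodule

local notation "⟪" x ", " y "⟫" => @inner ℂ L2 _ x y

lemma mulCLM_ae (a : Linf) (f : L2) : ⇑(mulCLM a f) =ᵐ[μH] fun x => a x * f x := by
  change ⇑(mulFun a f) =ᵐ[μH] _
  filter_upwards [mulFun_coe a f] with x hx
  simpa [Pi.smul_apply', smul_eq_mul] using hx

lemma star_ae (a : Linf) : ⇑(star a) =ᵐ[μH] fun x => (starRingEnd ℂ) (a x) :=
  MemLp.coeFn_toLp _

lemma mul_ae (a b : Linf) : ⇑(a * b) =ᵐ[μH] fun x => a x * b x := by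
  filter_upwards [MemLp.coeFn_toLp ((Lp.memLp b).smul (r := ⊤) (Lp.memLp a))] with x hx
  exact hx

lemma one_ae : ⇑(1 : Linf) =ᵐ[μH] fun _ => (1 : ℂ) :=
  MemLp.coeFn_toLp _

lemma pair_ae {a b : Linf} (h : a * b = 1) : ∀ᵐ x ∂μH, a x * b x = 1 := by
  have h1 := mul_ae a b
  rw [h] at h1
  filter_upwards [h1, one_ae] with x hx hy
  rw [← hx, hy]

lemma mulCLM_cancel {a b : Linf} (h : ∀ᵐ x ∂μH, a x * b x = 1) (f : L2) :
    mulCLM a (mulCLM b f) = f := by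
  apply Lp.ext
  filter_upwards [mulCLM_ae a (mulCLM b f), mulCLM_ae b f, h] with x h1 h2 h3
  rw [h1, h2, ← mul_assoc, h3, one_mul]

lemma mulCLM_star_cancel {a b : Linf} (h : ∀ᵐ x ∂μH, a x * b x = 1) (f : L2) :
    mulCLM (star b) (mulCLM (star a) f) = f := by
  apply Lp.ext
  filter_upwards [mulCLM_ae (star b) (mulCLM (star a) f), mulCLM_ae (star a) f,
    star_ae a, star_ae b, h] with x h1 h2 h3 h4 h5
  rw [h1, h2, h3, h4, ← mul_assoc, ← map_mul, mul_comm (b x), h5, map_one, one_mul]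

lemma mulCLM_mul (a b : Linf) (f : L2) : mulCLM (a * b) f = mulCLM a (mulCLM b f) := by
  apply Lp.ext
  filter_upwards [mulCLM_ae (a * b) f, mulCLM_ae a (mulCLM b f), mulCLM_ae b f,
    mul_ae a b] with x h1 h2 h3 h4
  rw [h1, h2, h3, h4, mul_assoc]

lemma mulCLM_one (f : L2) : mulCLM 1 f = f := by
  apply Lp.ext
  filter_upwards [mulCLM_ae 1 f, one_ae] with x h1 h2
  rw [h1, h2, one_mul]

lemma mulCLM_sub (a b : Linf) (f : L2) :
    mulCLM (a - b) f = mulCLM a f - mulCLM b f := by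
  apply Lp.ext
  filter_upwards [mulCLM_ae (a - b) f, Lp.coeFn_sub a b,
    Lp.coeFn_sub (mulCLM a f) (mulCLM b f), mulCLM_ae a f, mulCLM_ae b f] with x h1 h2 h3 h4 h5
  rw [h1, h3, Pi.sub_apply, h4, h5, h2, Pi.sub_apply, sub_mul]

lemma mulCLM_one_sub (a : Linf) (f : L2) : mulCLM (1 - a) f = f - mulCLM a f := by
  rw [mulCLM_sub, mulCLM_one]

lemma inner_mulCLM_left (a : Linf) (f g : L2) :
    ⟪mulCLM a f, g⟫ = ⟪f, mulCLM (star a) g⟫ := by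
  rw [MeasureTheory.L2.inner_def, MeasureTheory.L2.inner_def]
  apply integral_congr_ae
  filter_upwards [mulCLM_ae a f, mulCLM_ae (star a) g, star_ae a] with x h1 h2 h3
  rw [h1, h2, h3]
  simp only [RCLike.inner_apply, map_mul]
  ring

lemma inner_mulCLM_right (a : Linf) (f g : L2) :
    ⟪f, mulCLM a g⟫ = ⟪mulCLM (star a) f, g⟫ := by
  rw [MeasureTheory.L2.inner_def, MeasureTheory.L2.inner_def]
  apply integral_congr_ae
  filter_upwards [mulCLM_ae a g, mulCLM_ae (star a) f, star_ae a] with x h1 h2 h3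
  rw [h1, h2, h3]
  simp only [RCLike.inner_apply, map_mul, Complex.conj_conj]
  ring

lemma mem_smulSub {a : Linf} {K : Submodule ℂ L2} {f : L2} (hf : f ∈ K) :
    mulCLM a f ∈ smulSub a K :=
  ⟨f, hf, rfl⟩

lemma proj_congr {K : Submodule ℂ L2} [CompleteSpace K] {u v : L2}
    (h : ∀ k ∈ K, ⟪u - v, k⟫ = 0) :
    (K.orthogonalProjectionOnto u : L2) = (K.orthogonalProjectionOnto v : L2) := by
  apply eq_starProjection_of_mem_of_inner_eq_zero (Submodule.coe_mem _)
  intro w hw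
  have h1 : ⟪v - ↑(K.orthogonalProjectionOnto v), w⟫ = 0 := starProjection_inner_eq_zero v w hw
  have h2 := h w hw
  have h3 : u - ↑(K.orthogonalProjectionOnto v) =
      (u - v) + (v - ↑(K.orthogonalProjectionOnto v)) := by abel
  rw [h3, inner_add_left, h1, h2, add_zero]

lemma genToeplitz_apply (φ : Linf) (H₁ H₂ : Submodule ℂ L2) [CompleteSpace H₂] (f : H₁) :
    genToeplitz φ H₁ H₂ f = H₂.orthogonalProjectionOnto (mulCLM φ (f : L2)) := rfl

lemma genToeplitz_eq_zero_iff (φ : Linf) (H₁ H₂ : Submodule ℂ L2) [CompleteSpace H₂] :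
    genToeplitz φ H₁ H₂ = 0 ↔ ∀ f ∈ H₁, ∀ g ∈ H₂, ⟪mulCLM φ f, g⟫ = 0 := by
  constructor
  · intro h f hf g hg
    have h0 : genToeplitz φ H₁ H₂ ⟨f, hf⟩ = 0 := by rw [h]; rfl
    rw [genToeplitz_apply] at h0
    have h1 : ⟪mulCLM φ f - ↑(H₂.orthogonalProjectionOnto (mulCLM φ f)), g⟫ = 0 :=
      starProjection_inner_eq_zero (mulCLM φ f) g hg
    rw [h0] at h1
    simpa using h1
  · intro h
    refine ContinuousLinearMap.ext fun f => Subtype.ext ?_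
    have h0 : (H₂.orthogonalProjectionOnto (mulCLM φ (f : L2)) : L2) = 0 := by
      apply eq_starProjection_of_mem_of_inner_eq_zero (Submodule.zero_mem H₂)
      intro w hw
      simpa using h f f.2 w hw
    rw [ContinuousLinearMap.zero_apply, ZeroMemClass.coe_zero]
    exact h0

end Helpers

section MainProof

open MeasureTheory Submodule

local notation "⟪" x ", " y "⟫" => @inner ℂ L2 _ x y

/-- Proposition 2.16: with `E = T_{ā₂}^{H,K}` and
`F = T_{a₁}^{K,H}`, TFAE: (i) `E = F⁻¹`; (ii) `T_{ā₂ − a₁⁻¹}^{H,K} = 0`;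
(iii) `T_{ā₂⁻¹ − a₁}^{K,H} = 0`; (iv) `T_{1 − ā₂a₁}^K = 0`;
(v) `T_{1 − ā₂⁻¹a₁⁻¹}^H = 0`.  When these hold and `φ = ā₂ ψ a₁`, the identity
`T_φ^K = E T_ψ^H F` is a similarity. -/
theorem statement8 (H K : Submodule ℂ L2) [CompleteSpace H] [CompleteSpace K]
    (a₁ b₁ a₂ b₂ : Linf) (h₁ : GLinfPair a₁ b₁) (h₂ : GLinfPair a₂ b₂)
    (ha₁ : smulSub a₁ K = H) (ha₂ : smulSub a₂ K = H) :
    [((genToeplitz (star a₂) H K).comp (genToeplitz a₁ K H) =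
          ContinuousLinearMap.id ℂ K ∧
        (genToeplitz a₁ K H).comp (genToeplitz (star a₂) H K) =
          ContinuousLinearMap.id ℂ H),
      genToeplitz (star a₂ - b₁) H K = 0,
      genToeplitz (star b₂ - a₁) K H = 0,
      genToeplitz (1 - star a₂ * a₁) K K = 0,
      genToeplitz (1 - star b₂ * b₁) H H = 0].TFAE ∧
    (∀ φ ψ : Linf, φ = star a₂ * ψ * a₁ →
      (genToeplitz (star a₂) H K).comp (genToeplitz a₁ K H) =
        ContinuousLinearMap.id ℂ K →
      (genToeplitz a₁ K H).comp (genToeplitz (star a₂) H K) =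
        ContinuousLinearMap.id ℂ H →
      genToeplitz φ K K = (genToeplitz (star a₂) H K).comp
        ((genToeplitz ψ H H).comp (genToeplitz a₁ K H))) := by
  -- basic cancellation facts
  have c_ba : ∀ f : L2, mulCLM b₁ (mulCLM a₁ f) = f := mulCLM_cancel (pair_ae h₁.2)
  have c_ab : ∀ f : L2, mulCLM a₁ (mulCLM b₁ f) = f := mulCLM_cancel (pair_ae h₁.1)
  have c_a2b2 : ∀ f : L2, mulCLM a₂ (mulCLM b₂ f) = f := mulCLM_cancel (pair_ae h₂.1)
  have c_b2a2 : ∀ f : L2, mulCLM b₂ (mulCLM a₂ f) = f := mulCLM_cancel (pair_ae h₂.2)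
  have c_s : ∀ f : L2, mulCLM (star a₂) (mulCLM (star b₂) f) = f :=
    mulCLM_star_cancel (pair_ae h₂.2)
  -- memberships
  have memH₁ : ∀ f ∈ K, mulCLM a₁ f ∈ H := fun f hf => ha₁ ▸ mem_smulSub hf
  have memH₂ : ∀ f ∈ K, mulCLM a₂ f ∈ H := fun f hf => ha₂ ▸ mem_smulSub hf
  have memK₁ : ∀ g ∈ H, mulCLM b₁ g ∈ K := by
    intro g hg
    rw [← ha₁, smulSub, Submodule.mem_map] at hg
    obtain ⟨f, hf, he⟩ := hg
    have he' : mulCLM a₁ f = g := he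
    rw [← he', c_ba]
    exact hf
  have memK₂ : ∀ g ∈ H, mulCLM b₂ g ∈ K := by
    intro g hg
    rw [← ha₂, smulSub, Submodule.mem_map] at hg
    obtain ⟨f, hf, he⟩ := hg
    have he' : mulCLM a₂ f = g := he
    rw [← he', c_b2a2]
    exact hf
  -- the central predicate
  set Q : Prop := ∀ f ∈ K, ∀ k ∈ K, ⟪mulCLM (star a₂) (mulCLM a₁ f), k⟫ = ⟪f, k⟫ with hQdef
  -- (ii) ↔ Q
  have h2Q : genToeplitz (star a₂ - b₁) H K = 0 ↔ Q := by
    rw [genToeplitz_eq_zero_iff, hQdef]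
    constructor
    · intro h f hf k hk
      have h0 := h (mulCLM a₁ f) (memH₁ f hf) k hk
      rw [mulCLM_sub, inner_sub_left, sub_eq_zero, c_ba] at h0
      exact h0
    · intro h g hg k hk
      have h0 := h (mulCLM b₁ g) (memK₁ g hg) k hk
      rw [c_ab] at h0
      rw [mulCLM_sub, inner_sub_left, sub_eq_zero]
      exact h0
  -- (iv) ↔ Q
  have h4Q : genToeplitz (1 - star a₂ * a₁) K K = 0 ↔ Q := by
    rw [genToeplitz_eq_zero_iff, hQdef]
    constructor
    · intro h f hf k hk
      have h0 := h f hf k hk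
      rw [mulCLM_one_sub, mulCLM_mul, inner_sub_left, sub_eq_zero] at h0
      exact h0.symm
    · intro h f hf k hk
      rw [mulCLM_one_sub, mulCLM_mul, inner_sub_left, sub_eq_zero]
      exact (h f hf k hk).symm
  -- (iii) ↔ Q
  have key3 : ∀ f k : L2, ⟪mulCLM (star b₂ - a₁) f, mulCLM a₂ k⟫ =
      ⟪f, k⟫ - ⟪mulCLM (star a₂) (mulCLM a₁ f), k⟫ := by
    intro f k
    rw [inner_mulCLM_right, mulCLM_sub, map_sub, c_s, inner_sub_left]
  have h3Q : genToeplitz (star b₂ - a₁) K H = 0 ↔ Q := by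
    rw [genToeplitz_eq_zero_iff, hQdef]
    constructor
    · intro h f hf k hk
      have h0 := h f hf (mulCLM a₂ k) (memH₂ k hk)
      rw [key3, sub_eq_zero] at h0
      exact h0.symm
    · intro h f hf g hg
      have hg' : mulCLM a₂ (mulCLM b₂ g) = g := c_a2b2 g
      rw [← hg', key3, sub_eq_zero]
      exact (h f hf (mulCLM b₂ g) (memK₂ g hg)).symm
  -- (v) ↔ Q
  have key5 : ∀ f k : L2, ⟪mulCLM (1 - star b₂ * b₁) (mulCLM a₁ f), mulCLM a₂ k⟫ =
      ⟪mulCLM (star a₂) (mulCLM a₁ f), k⟫ - ⟪f, k⟫ := by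
    intro f k
    rw [inner_mulCLM_right, mulCLM_one_sub, mulCLM_mul, c_ba, map_sub, c_s, inner_sub_left]
  have h5Q : genToeplitz (1 - star b₂ * b₁) H H = 0 ↔ Q := by
    rw [genToeplitz_eq_zero_iff, hQdef]
    constructor
    · intro h f hf k hk
      have h0 := h (mulCLM a₁ f) (memH₁ f hf) (mulCLM a₂ k) (memH₂ k hk)
      rw [key5, sub_eq_zero] at h0
      exact h0
    · intro h g hg w hw
      have hg' : mulCLM a₁ (mulCLM b₁ g) = g := c_ab g
      have hw' : mulCLM a₂ (mulCLM b₂ w) = w := c_a2b2 w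
      rw [← hg', ← hw', key5, sub_eq_zero]
      exact h (mulCLM b₁ g) (memK₁ g hg) (mulCLM b₂ w) (memK₂ w hw)
  -- (i) ↔ Q
  have h1Q : ((genToeplitz (star a₂) H K).comp (genToeplitz a₁ K H) =
        ContinuousLinearMap.id ℂ K ∧
      (genToeplitz a₁ K H).comp (genToeplitz (star a₂) H K) =
        ContinuousLinearMap.id ℂ H) ↔ Q := by
    rw [hQdef]
    constructor
    · rintro ⟨hEF, -⟩ f hf k hk
      have h0 : ((genToeplitz (star a₂) H K).comp (genToeplitz a₁ K H)) ⟨f, hf⟩ =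
          (⟨f, hf⟩ : K) := by rw [hEF]; rfl
      have hF : ((genToeplitz a₁ K H) ⟨f, hf⟩ : L2) = mulCLM a₁ f :=
        starProjection_eq_self_iff.mpr (memH₁ f hf)
      have h1 : (K.orthogonalProjectionOnto (mulCLM (star a₂) (mulCLM a₁ f)) : L2) = f := by
        have h2 := congrArg Subtype.val h0
        rw [ContinuousLinearMap.comp_apply, genToeplitz_apply, hF] at h2
        exact h2
      have h3 : ⟪mulCLM (star a₂) (mulCLM a₁ f) -
          ↑(K.orthogonalProjectionOnto (mulCLM (star a₂) (mulCLM a₁ f))), k⟫ = 0 :=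
        starProjection_inner_eq_zero
        (mulCLM (star a₂) (mulCLM a₁ f)) k hk
      rw [h1, inner_sub_left, sub_eq_zero] at h3
      exact h3
    · intro hQ
      constructor
      · refine ContinuousLinearMap.ext fun f => Subtype.ext ?_
        have hF : ((genToeplitz a₁ K H) f : L2) = mulCLM a₁ ↑f :=
          starProjection_eq_self_iff.mpr (memH₁ _ f.2)
        rw [ContinuousLinearMap.comp_apply, genToeplitz_apply, hF,
          ContinuousLinearMap.id_apply]
        apply eq_starProjection_of_mem_of_inner_eq_zero f.2
        intro w hw
        rw [inner_sub_left, sub_eq_zero]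
        exact hQ ↑f f.2 w hw
      · refine ContinuousLinearMap.ext fun g => Subtype.ext ?_
        have hE : ((genToeplitz (star a₂) H K) g : L2) = mulCLM b₁ ↑g := by
          rw [genToeplitz_apply]
          apply eq_starProjection_of_mem_of_inner_eq_zero (memK₁ ↑g g.2)
          intro w hw
          rw [inner_sub_left, sub_eq_zero]
          have h0 := hQ (mulCLM b₁ ↑g) (memK₁ ↑g g.2) w hw
          rw [c_ab] at h0
          exact h0
        rw [ContinuousLinearMap.comp_apply, genToeplitz_apply, hE, c_ab,
          ContinuousLinearMap.id_apply]
        exact starProjection_eq_self_iff.mpr g.2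
  constructor
  · tfae_have 1 ↔ 4 := h1Q.trans h4Q.symm
    tfae_have 2 ↔ 4 := h2Q.trans h4Q.symm
    tfae_have 3 ↔ 4 := h3Q.trans h4Q.symm
    tfae_have 5 ↔ 4 := h5Q.trans h4Q.symm
    tfae_finish
  · intro φ ψ hφ _ _
    refine ContinuousLinearMap.ext fun f => Subtype.ext ?_
    have hF : ((genToeplitz a₁ K H) f : L2) = mulCLM a₁ ↑f :=
      starProjection_eq_self_iff.mpr (memH₁ _ f.2)
    rw [ContinuousLinearMap.comp_apply, ContinuousLinearMap.comp_apply,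
      genToeplitz_apply φ, genToeplitz_apply (star a₂), genToeplitz_apply ψ, hF]
    have hφ' : mulCLM φ ↑f = mulCLM (star a₂) (mulCLM ψ (mulCLM a₁ ↑f)) := by
      rw [hφ, mulCLM_mul, mulCLM_mul]
    rw [hφ']
    apply proj_congr
    intro k hk
    rw [← map_sub, ← inner_mulCLM_right]
    exact starProjection_inner_eq_zero _ _ (memH₂ k hk)

end MainProof
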